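/- Let κ be an uncountable cardinal that is singular (cof(κ) < κ). Then the space ^κ2 with the bounded topology admits a partition into at least κ many nonempty clopen sets, and hence is not κ-compact. -/

import Mathlib

open Cardinal Set

/-- The bounded topology on `^κ2`, generated by the sets
`N_s = {x : s ⊆ x}` for `s ∈ ^{<κ}2` (initial segments). -/
def boundedTopologySeq (κ : Cardinal) : TopologicalSpace (κ.ord.ToType → Bool) :=
  TopologicalSpace.generateFrom
    {U | ∃ (x : κ.ord.ToType → Bool) (j : κ.ord.ToType), U = {y | ∀ i < j, y i = x i}}

/-- A topological space is `κ`-compact if every open cover has a subcover of size `< κ`. -/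
def kappaCompact (κ : Cardinal) {X : Type*} (t : TopologicalSpace X) : Prop :=
  ∀ 𝒰 : Set (Set X), (∀ U ∈ 𝒰, t.IsOpen U) → ⋃₀ 𝒰 = Set.univ →
    ∃ 𝒱 ⊆ 𝒰, Cardinal.mk ↥𝒱 < κ ∧ ⋃₀ 𝒱 = Set.univ

/-- A set all of whose points have a basic neighborhood inside it is open in the
bounded topology. -/
lemma bt_open {κ : Cardinal} {U : Set (κ.ord.ToType → Bool)}
    (h : ∀ x ∈ U, ∃ j, ∀ y, (∀ i < j, y i = x i) → y ∈ U) :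
    (boundedTopologySeq κ).IsOpen U := by
  have hU : U = ⋃₀ {V | (∃ (x : κ.ord.ToType → Bool) (j : κ.ord.ToType), V = {y | ∀ i < j, y i = x i}) ∧ V ⊆ U} := by
    ext z
    constructor
    · intro hz
      obtain ⟨j, hj⟩ := h z hz
      exact ⟨{y | ∀ i < j, y i = z i}, ⟨⟨z, j, rfl⟩, fun y hy => hj y hy⟩, fun i _ => rfl⟩
    · rintro ⟨V, ⟨_, hVU⟩, hzV⟩
      exact hVU hzV
  rw [hU]
  exact TopologicalSpace.GenerateOpen.sUnion _
    (fun V hV => TopologicalSpace.GenerateOpen.basic V hV.1)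

open Ordinal in
/-- The key combinatorial construction: a locally constant function on `^κ2` with
at least `κ` many values. -/
lemma aux_exists_f (κ : Cardinal) (hunc : ℵ₀ < κ) (hsing : κ.ord.cof < κ) :
    ∃ f : (κ.ord.ToType → Bool) → Option (κ.ord.ToType × (κ.ord.ToType → Bool)),
      (∀ x, ∃ j, ∀ y, (∀ i < j, y i = x i) → f y = f x) ∧
      κ ≤ #(Set.range f) := by
  classical
  haveI : IsWellOrder κ.ord.ToType (· < ·) := isWellOrder_lt
  have hκ0 : ℵ₀ ≤ κ := hunc.le
  have : NoMaxOrder κ.ord.ToType := Cardinal.noMaxOrder hκ0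
  -- κ is a limit cardinal
  have hsucc : ∀ μ < κ, Order.succ μ < κ := by
    intro μ hμ
    rcases lt_or_ge μ ℵ₀ with h | h
    · exact lt_of_le_of_lt (Order.succ_le_of_lt h) hunc
    · rcases lt_or_eq_of_le (Order.succ_le_of_lt hμ) with h2 | h2
      · exact h2
      · exfalso
        have hreg := Cardinal.isRegular_succ h
        rw [h2] at hreg
        exact absurd hreg.2 (not_le.2 hsing)
  -- initial segments of all cardinalities < κ exist
  have hIio : ∀ μ < κ, ∃ i : κ.ord.ToType, μ ≤ #(Set.Iio i) := by
    intro μ hμ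
    have h1 : μ.ord < type ((· < ·) : κ.ord.ToType → κ.ord.ToType → Prop) := by
      rw [type_toType]; exact Cardinal.ord_lt_ord.2 hμ
    refine ⟨enum ((· < ·) : κ.ord.ToType → κ.ord.ToType → Prop) ⟨μ.ord, h1⟩, ?_⟩
    have h2 : #(Set.Iio (enum ((· < ·) : κ.ord.ToType → κ.ord.ToType → Prop) ⟨μ.ord, h1⟩))
        = (typein ((· < ·) : κ.ord.ToType → κ.ord.ToType → Prop) (enum ((· < ·) : κ.ord.ToType → κ.ord.ToType → Prop) ⟨μ.ord, h1⟩)).card :=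
      card_typein (r := ((· < ·) : κ.ord.ToType → κ.ord.ToType → Prop)) _
    rw [h2, typein_enum, Cardinal.card_ord]
  -- cofinal set S of cardinality cof κ
  obtain ⟨S, hSu, hScard⟩ := Order.exists_cof_eq κ.ord.ToType
  rw [Ordinal.cof_toType] at hScard
  -- bounded injection of S
  obtain ⟨i₀, hi₀⟩ := hIio κ.ord.cof hsing
  have hg : #(↥S) ≤ #(Set.Iio i₀) := hScard ▸ hi₀
  obtain ⟨g⟩ := (Cardinal.le_def _ _).1 hg
  set e : κ.ord.ToType → κ.ord.ToType := fun i => if h : i ∈ S then ((g ⟨i, h⟩ : ↥(Set.Iio i₀)) : κ.ord.ToType) else i₀ with he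
  have he_lt : ∀ s ∈ S, e s < i₀ := by
    intro s hs
    simp only [he, dif_pos hs]
    exact (g ⟨s, hs⟩).2
  have he_inj : ∀ s ∈ S, ∀ t ∈ S, e s = e t → s = t := by
    intro s hs t ht hst
    simp only [he, dif_pos hs, dif_pos ht] at hst
    have h2 := g.injective (Subtype.ext hst)
    exact congrArg Subtype.val h2
  -- the function f
  set M : (κ.ord.ToType → Bool) → Set κ.ord.ToType := fun x => {s | s ∈ S ∧ x (e s) = false} with hM
  set f : (κ.ord.ToType → Bool) → Option (κ.ord.ToType × (κ.ord.ToType → Bool)) := fun x =>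
    if h : (M x).Nonempty then
      some (wellFounded_lt.min (M x) h,
        fun i => if i < wellFounded_lt.min (M x) h then x i else false)
    else none with hf
  have hMeq : ∀ x y : κ.ord.ToType → Bool, (∀ s ∈ S, y (e s) = x (e s)) → M y = M x := by
    intro x y hxy
    ext s
    simp only [hM, Set.mem_setOf_eq]
    constructor
    · rintro ⟨hs, h2⟩; exact ⟨hs, (hxy s hs) ▸ h2⟩
    · rintro ⟨hs, h2⟩; exact ⟨hs, (hxy s hs).symm ▸ h2⟩
  refine ⟨f, ?_, ?_⟩
  · -- local constancy
    intro x
    by_cases h : (M x).Nonempty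
    · set m := wellFounded_lt.min (M x) h with hm
      obtain ⟨j, hj⟩ := exists_gt (max i₀ m)
      refine ⟨j, fun y hy => ?_⟩
      have hagr : ∀ s ∈ S, y (e s) = x (e s) := fun s hs =>
        hy (e s) (lt_of_lt_of_le (he_lt s hs) ((le_max_left i₀ m).trans hj.le))
      have hME : M y = M x := hMeq x y hagr
      have hy' : (M y).Nonempty := hME ▸ h
      simp only [hf, dif_pos h, dif_pos hy']
      have hmin : wellFounded_lt.min (M y) hy' = m := by
        rw [hm]; congr 1
      have htr : (fun i => if i < m then y i else false)
          = (fun i => if i < m then x i else false) := by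
        funext i
        by_cases hi : i < m
        · simp only [if_pos hi]
          exact hy i (lt_of_lt_of_le hi ((le_max_right i₀ m).trans hj.le))
        · simp only [if_neg hi]
      rw [hmin, ← hm, htr]
    · obtain ⟨j, hj⟩ := exists_gt i₀
      refine ⟨j, fun y hy => ?_⟩
      have hagr : ∀ s ∈ S, y (e s) = x (e s) := fun s hs =>
        hy (e s) (lt_of_lt_of_le (he_lt s hs) hj.le)
      have hME : M y = M x := hMeq x y hagr
      have hy' : ¬ (M y).Nonempty := hME ▸ h
      simp only [hf, dif_neg h, dif_neg hy']
  · -- counting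
    have hcount : ∀ μ < κ, μ < #(Set.range f) := by
      intro μ hμ
      set ν := Order.succ (max (max μ κ.ord.cof) ℵ₀) with hν
      have hνκ : ν < κ := hsucc _ (max_lt (max_lt hμ hsing) hunc)
      have hνinf : ℵ₀ ≤ ν := le_trans (le_max_right _ _) (Order.le_succ _)
      obtain ⟨i, hi⟩ := hIio ν hνκ
      obtain ⟨s₀, hs₀S, hs₀⟩ := hSu i
      have his₀ : i ≤ s₀ := hs₀
      set D := Set.Iio s₀ \ (e '' S) with hD
      have hDcard : ν ≤ #(↥D) := by
        by_contra hcon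
        push_neg at hcon
        have hsub : Set.Iio s₀ ⊆ D ∪ (e '' S) := by
          intro z hz
          by_cases hzS : z ∈ e '' S
          · exact Or.inr hzS
          · exact Or.inl ⟨hz, hzS⟩
        have h1 : #(Set.Iio s₀) ≤ #(↥D) + #(↥(e '' S)) :=
          le_trans (Cardinal.mk_le_mk_of_subset hsub) (Cardinal.mk_union_le _ _)
        have h2 : #(↥(e '' S)) < ν := by
          calc #(↥(e '' S)) ≤ #(↥S) := Cardinal.mk_image_le
            _ = κ.ord.cof := hScard
            _ ≤ max (max μ κ.ord.cof) ℵ₀ := le_trans (le_max_right _ _) (le_max_left _ _)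
            _ < ν := Order.lt_succ _
        have h3 : #(↥D) + #(↥(e '' S)) < ν := Cardinal.add_lt_of_lt hνinf hcon h2
        have h4 : ν ≤ #(Set.Iio s₀) :=
          le_trans hi (Cardinal.mk_le_mk_of_subset (fun z hz => lt_of_lt_of_le hz his₀))
        exact absurd (lt_of_le_of_lt (h4.trans h1) h3) (lt_irrefl ν)
      -- the injection
      set xfun : (↥D → Bool) → (κ.ord.ToType → Bool) := fun u i =>
        if (∃ s ∈ S, s < s₀ ∧ e s = i) then true
        else if i = e s₀ then false
        else if h : i ∈ D then u ⟨i, h⟩ else true with hxfun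
      have hx_es₀ : ∀ u, xfun u (e s₀) = false := by
        intro u
        have h1 : ¬ (∃ s ∈ S, s < s₀ ∧ e s = e s₀) := by
          rintro ⟨s, hs, hlt, heq⟩
          exact absurd (he_inj s hs s₀ hs₀S heq) (ne_of_lt hlt)
        simp only [hxfun]
        rw [if_neg h1]
        simp
      have hx_lt : ∀ u, ∀ s ∈ S, s < s₀ → xfun u (e s) = true := by
        intro u s hs hlt
        have hw : ∃ t ∈ S, t < s₀ ∧ e t = e s := ⟨s, hs, hlt, rfl⟩
        simp only [hxfun]
        rw [if_pos hw]
      have hx_D : ∀ u, ∀ d : ↥D, xfun u (d : κ.ord.ToType) = u d := by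
        intro u d
        have h1 : ¬ (∃ s ∈ S, s < s₀ ∧ e s = (d : κ.ord.ToType)) := by
          rintro ⟨s, hs, -, heq⟩
          exact d.2.2 ⟨s, hs, heq⟩
        have h2 : (d : κ.ord.ToType) ≠ e s₀ := by
          intro heq
          exact d.2.2 ⟨s₀, hs₀S, heq.symm⟩
        simp only [hxfun]
        rw [if_neg h1, if_neg h2, dif_pos d.2]
      have hmin : ∀ u, ∃ h : (M (xfun u)).Nonempty, wellFounded_lt.min (M (xfun u)) h = s₀ := by
        intro u
        have hs₀M : s₀ ∈ M (xfun u) := ⟨hs₀S, hx_es₀ u⟩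
        refine ⟨⟨s₀, hs₀M⟩, ?_⟩
        have h1 : wellFounded_lt.min (M (xfun u)) ⟨s₀, hs₀M⟩ ∈ M (xfun u) :=
          wellFounded_lt.min_mem _ _
        have h2 : ¬ s₀ < wellFounded_lt.min (M (xfun u)) ⟨s₀, hs₀M⟩ :=
          wellFounded_lt.not_lt_min _ hs₀M
        rcases lt_trichotomy (wellFounded_lt.min (M (xfun u)) ⟨s₀, hs₀M⟩) s₀ with h3 | h3 | h3
        · exfalso
          have := hx_lt u _ h1.1 h3
          rw [h1.2] at this
          exact Bool.false_ne_true this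
        · exact h3
        · exact absurd h3 h2
      have hfx : ∀ u, f (xfun u) = some (s₀, fun i => if i < s₀ then xfun u i else false) := by
        intro u
        obtain ⟨hne, hmn⟩ := hmin u
        simp only [hf, dif_pos hne, hmn]
      have hinj : Function.Injective (fun u : ↥D → Bool => f (xfun u)) := by
        intro u u' huu
        simp only [hfx] at huu
        have h1 := (Prod.mk.injEq .. ▸ Option.some.inj huu).2
        funext d
        have h2 := congrFun h1 (d : κ.ord.ToType)
        have hd : (d : κ.ord.ToType) < s₀ := d.2.1
        rw [if_pos hd, if_pos hd, hx_D u d, hx_D u' d] at h2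
        exact h2
      have hle : #(↥D → Bool) ≤ #(Set.range f) := by
        refine Cardinal.mk_le_of_injective (f := fun u : ↥D → Bool =>
          (⟨f (xfun u), Set.mem_range_self _⟩ : ↥(Set.range f))) ?_
        intro u u' huu
        exact hinj (Subtype.ext_iff.1 huu)
      have hpow : #(↥D) < #(↥D → Bool) := by
        have h1 : #(↥D → Bool) = 2 ^ #(↥D) := by
          simp [Cardinal.mk_arrow]
        rw [h1]
        exact Cardinal.cantor _
      calc μ ≤ max (max μ κ.ord.cof) ℵ₀ := le_trans (le_max_left _ _) (le_max_left _ _)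
        _ < ν := Order.lt_succ _
        _ ≤ #(↥D) := hDcard
        _ < #(↥D → Bool) := hpow
        _ ≤ #(Set.range f) := hle
    by_contra hcon
    push_neg at hcon
    exact absurd (hcount _ hcon) (lt_irrefl _)

/-- If `κ` is an uncountable singular cardinal (`cof κ < κ`), then `^κ2` with the bounded
topology admits a partition into at least `κ` many nonempty clopen sets, and hence is
not `κ`-compact. -/
theorem stmt_2 (κ : Cardinal) (hunc : ℵ₀ < κ) (hsing : κ.ord.cof < κ) :
    (∃ P : Set (Set (κ.ord.ToType → Bool)),
      (∀ U ∈ P, U.Nonempty ∧ (boundedTopologySeq κ).IsOpen U ∧ (boundedTopologySeq κ).IsOpen Uᶜ) ∧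
      (∀ U ∈ P, ∀ V ∈ P, U ≠ V → U ∩ V = ∅) ∧
      ⋃₀ P = Set.univ ∧
      κ ≤ Cardinal.mk ↥P) ∧
    ¬ kappaCompact κ (boundedTopologySeq κ) := by
  obtain ⟨f, hlc, hcard⟩ := aux_exists_f κ hunc hsing
  set P := (fun v => f ⁻¹' {v}) '' (Set.range f) with hP
  have hopen : ∀ A, (boundedTopologySeq κ).IsOpen (f ⁻¹' A) := by
    intro A
    refine bt_open ?_
    intro x hx
    obtain ⟨j, hj⟩ := hlc x
    exact ⟨j, fun y hy => by
      simp only [Set.mem_preimage] at hx ⊢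
      rw [hj y hy]; exact hx⟩
  have hprop1 : ∀ U ∈ P, U.Nonempty ∧ (boundedTopologySeq κ).IsOpen U ∧
      (boundedTopologySeq κ).IsOpen Uᶜ := by
    rintro U ⟨v, ⟨x, rfl⟩, rfl⟩
    refine ⟨⟨x, rfl⟩, hopen _, ?_⟩
    have h1 : (f ⁻¹' {f x})ᶜ = f ⁻¹' ({f x}ᶜ) := rfl
    rw [h1]
    exact hopen _
  have hdisj : ∀ U ∈ P, ∀ V ∈ P, U ≠ V → U ∩ V = ∅ := by
    rintro U ⟨v, hv, rfl⟩ V ⟨w, hw, rfl⟩ hne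
    ext z
    simp only [Set.mem_inter_iff, Set.mem_preimage, Set.mem_singleton_iff,
      Set.mem_empty_iff_false, iff_false, not_and]
    intro h1 h2
    have hvw : v = w := h1.symm.trans h2
    exact hne (by rw [hvw])
  have hcover : ⋃₀ P = Set.univ := by
    ext z
    simp only [Set.mem_sUnion, Set.mem_univ, iff_true]
    exact ⟨f ⁻¹' {f z}, ⟨f z, ⟨z, rfl⟩, rfl⟩, rfl⟩
  have hcardP : κ ≤ Cardinal.mk ↥P := by
    refine le_trans hcard ?_
    refine Cardinal.mk_le_of_injective (f := fun v : ↥(Set.range f) =>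
      (⟨f ⁻¹' {(v : Option _)}, ⟨(v : Option _), v.2, rfl⟩⟩ : ↥P)) ?_
    intro v w hvw
    have h1 : f ⁻¹' {(v : Option _)} = f ⁻¹' {(w : Option _)} := Subtype.ext_iff.1 hvw
    obtain ⟨x, hx⟩ := v.2
    have h2 : x ∈ f ⁻¹' {(v : Option _)} := by simp [Set.mem_preimage, hx]
    rw [h1] at h2
    simp only [Set.mem_preimage, Set.mem_singleton_iff] at h2
    exact Subtype.ext (by rw [← hx, h2])
  refine ⟨⟨P, hprop1, hdisj, hcover, hcardP⟩, ?_⟩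
  intro hKC
  obtain ⟨𝒱, h𝒱P, h𝒱card, h𝒱cov⟩ := hKC P (fun U hU => (hprop1 U hU).2.1) hcover
  have hPV : P ⊆ 𝒱 := by
    intro U hU
    obtain ⟨x, hx⟩ := (hprop1 U hU).1
    have hxcov : x ∈ ⋃₀ 𝒱 := h𝒱cov ▸ Set.mem_univ x
    obtain ⟨V, hV, hxV⟩ := hxcov
    have hUV : U = V := by
      by_contra hne
      have hd := hdisj U hU V (h𝒱P hV) hne
      exact absurd (Set.mem_inter hx hxV) (hd ▸ Set.notMem_empty x)
    rwa [hUV]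
  have h𝒱eq : 𝒱 = P := subset_antisymm h𝒱P hPV
  rw [h𝒱eq] at h𝒱card
  exact absurd hcardP (not_le.2 h𝒱card)
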